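/- Let n ≥ 2 and s ≥ 1 with 2s − 1 ≤ 2n − 1 and n ≠ 2s − 1. In ZMod (8n), let R = {2, 8n−2, 2s−1, 8n−(2s−1), 4n−(2s−1), 4n+(2s−1)} and S = {2, 8n−2, 2n−(2s−1), 6n+(2s−1), 2n+(2s−1), 6n−(2s−1)}. Then there is no unit u of ZMod (8n) with u·R = S; that is, the isomorphic circulant graphs C_{8n}(R) and C_{8n}(S) are not Adam's (Type-1) isomorphic. -/

import Mathlib

/-- The connection set R = {2, 8n−2, 2s−1, 8n−(2s−1), 4n−(2s−1), 4n+(2s−1)} in ZMod (8n). -/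
def Rconn (n s : ℕ) : Set (ZMod (8 * n)) :=
  {((2 : ℕ) : ZMod (8 * n)), ((8 * n - 2 : ℕ) : ZMod (8 * n)),
   ((2 * s - 1 : ℕ) : ZMod (8 * n)), ((8 * n - (2 * s - 1) : ℕ) : ZMod (8 * n)),
   ((4 * n - (2 * s - 1) : ℕ) : ZMod (8 * n)), ((4 * n + (2 * s - 1) : ℕ) : ZMod (8 * n))}

/-- The connection set S = {2, 8n−2, 2n−(2s−1), 6n+(2s−1), 2n+(2s−1), 6n−(2s−1)} in ZMod (8n). -/
def Sconn (n s : ℕ) : Set (ZMod (8 * n)) :=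
  {((2 : ℕ) : ZMod (8 * n)), ((8 * n - 2 : ℕ) : ZMod (8 * n)),
   ((2 * n - (2 * s - 1) : ℕ) : ZMod (8 * n)), ((6 * n + (2 * s - 1) : ℕ) : ZMod (8 * n)),
   ((2 * n + (2 * s - 1) : ℕ) : ZMod (8 * n)), ((6 * n - (2 * s - 1) : ℕ) : ZMod (8 * n))}

/-- If `m ∣ x` and `-2m < x < 3m` with `m > 0`, then `x ∈ {-m, 0, m, 2m}`. -/
private lemma int_helper (m x : ℤ) (hm : 0 < m) (h : m ∣ x) (h1 : -2*m < x) (h2 : x < 3*m) :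
    x = -m ∨ x = 0 ∨ x = m ∨ x = 2*m := by
  obtain ⟨k, rfl⟩ := h
  have hk1 : -2 < k := by nlinarith
  have hk2 : k < 3 := by nlinarith
  interval_cases k <;> omega

/-- From `u·a = T` and `u·2 = ±2` in `ZMod (8n)`, derive `8n ∣ 2a ∓ 2T` over `ℤ`. -/
private lemma step (n : ℕ) (hn : 1 ≤ n) (u : (ZMod (8*n))ˣ) (a T : ℕ)
    (ht : (u : ZMod (8*n)) * ((a : ℕ) : ZMod (8*n)) = ((T : ℕ) : ZMod (8*n)))
    (h2 : (u : ZMod (8*n)) * ((2:ℕ) : ZMod (8*n)) = ((2:ℕ) : ZMod (8*n)) ∨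
          (u : ZMod (8*n)) * ((2:ℕ) : ZMod (8*n)) = ((8*n - 2 : ℕ) : ZMod (8*n))) :
    ((8*n : ℕ) : ℤ) ∣ 2*(a:ℤ) - 2*(T:ℤ) ∨ ((8*n : ℕ) : ℤ) ∣ 2*(a:ℤ) + 2*(T:ℤ) := by
  have e : ((2:ℕ) : ZMod (8*n)) * ((T : ℕ) : ZMod (8*n))
      = ((u : ZMod (8*n)) * ((2:ℕ) : ZMod (8*n))) * ((a : ℕ) : ZMod (8*n)) := by
    rw [← ht]; ring
  rcases h2 with h2 | h2
  · left
    rw [h2] at e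
    have e3 : ((2*T : ℕ) : ZMod (8*n)) = ((2*a : ℕ) : ZMod (8*n)) := by
      rw [Nat.cast_mul, Nat.cast_mul]; exact e
    have hmod := (ZMod.natCast_eq_natCast_iff _ _ _).mp e3
    have hd := hmod.dvd
    push_cast at hd ⊢
    convert hd using 1
  · right
    have hc : ((8*n - 2 : ℕ) : ZMod (8*n)) = -(((2:ℕ) : ZMod (8*n))) := by
      have hadd : ((8*n - 2 : ℕ) : ZMod (8*n)) + ((2:ℕ) : ZMod (8*n)) = 0 := by
        rw [← Nat.cast_add]
        have : 8*n - 2 + 2 = 8*n := by omega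
        rw [this, ZMod.natCast_self]
      linear_combination hadd
    rw [h2, hc] at e
    have e3 : ((2*T + 2*a : ℕ) : ZMod (8*n)) = ((0 : ℕ) : ZMod (8*n)) := by
      push_cast
      linear_combination e
    have hmod := (ZMod.natCast_eq_natCast_iff _ _ _).mp e3
    have hd := hmod.dvd
    push_cast at hd ⊢
    convert (dvd_neg.mpr hd) using 1
    exacts [rfl, by ring]

/-- C_{8n}(R) and C_{8n}(S) are not Adam's (Type-1) isomorphic: no unit u of ZMod (8n)
satisfies u·R = S. -/
theorem not_adams_iso (n s : ℕ) (hn : 2 ≤ n) (hs : 1 ≤ s) (hsn : 2 * s - 1 ≤ 2 * n - 1)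
    (hne : n ≠ 2 * s - 1) :
    ¬ ∃ u : (ZMod (8 * n))ˣ,
      (fun r => (u : ZMod (8 * n)) * r) '' Rconn n s = Sconn n s := by
  rintro ⟨u, hu⟩
  haveI : NeZero (8*n) := ⟨by omega⟩
  -- memberships
  have h2R : ((2:ℕ) : ZMod (8*n)) ∈ Rconn n s := by
    simp only [Rconn, Set.mem_insert_iff, Set.mem_singleton_iff]; tauto
  have haR : ((2*s - 1 : ℕ) : ZMod (8*n)) ∈ Rconn n s := by
    simp only [Rconn, Set.mem_insert_iff, Set.mem_singleton_iff]; tauto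
  have h2S : (u : ZMod (8*n)) * ((2:ℕ) : ZMod (8*n)) ∈ Sconn n s := by
    rw [← hu]; exact ⟨_, h2R, rfl⟩
  have haS : (u : ZMod (8*n)) * ((2*s - 1 : ℕ) : ZMod (8*n)) ∈ Sconn n s := by
    rw [← hu]; exact ⟨_, haR, rfl⟩
  simp only [Sconn, Set.mem_insert_iff, Set.mem_singleton_iff] at h2S haS
  -- parity via the ring hom to ZMod 2
  have hdvd2 : (2 : ℕ) ∣ 8*n := ⟨4*n, by ring⟩
  let φ : ZMod (8*n) →+* ZMod 2 := ZMod.castHom hdvd2 (ZMod 2)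
  have hodd : ∀ x : ℕ, x % 2 = 1 → φ ((x : ℕ) : ZMod (8*n)) = 1 := by
    intro x hx
    rw [map_natCast, ← ZMod.natCast_mod x 2, hx, Nat.cast_one]
  have heven : ∀ x : ℕ, x % 2 = 0 → φ ((x : ℕ) : ZMod (8*n)) = 0 := by
    intro x hx
    rw [map_natCast, ← ZMod.natCast_mod x 2, hx, Nat.cast_zero]
  have hcases : ∀ x : ZMod 2, x = 0 ∨ x = 1 := by decide
  have hu1 : φ (u : ZMod (8*n)) = 1 := by
    have hunit : IsUnit (φ (u : ZMod (8*n))) := u.isUnit.map φ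
    rcases hcases (φ (u : ZMod (8*n))) with h | h
    · rw [h] at hunit; exact absurd hunit (by simp)
    · exact h
  have hne01 : (0 : ZMod 2) ≠ 1 := by decide
  have elim_odd : ∀ x : ℕ, x % 2 = 1 →
      (u : ZMod (8*n)) * ((2:ℕ) : ZMod (8*n)) ≠ ((x : ℕ) : ZMod (8*n)) := by
    intro x hx heq
    have := congrArg φ heq
    rw [map_mul, hu1, one_mul, heven 2 (by omega), hodd x hx] at this
    exact hne01 this
  have elim_even : ∀ x : ℕ, x % 2 = 0 →
      (u : ZMod (8*n)) * ((2*s - 1 : ℕ) : ZMod (8*n)) ≠ ((x : ℕ) : ZMod (8*n)) := by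
    intro x hx heq
    have := congrArg φ heq
    rw [map_mul, hu1, one_mul, hodd (2*s-1) (by omega), heven x hx] at this
    exact hne01 this.symm
  have h2 : (u : ZMod (8*n)) * ((2:ℕ) : ZMod (8*n)) = ((2:ℕ) : ZMod (8*n)) ∨
      (u : ZMod (8*n)) * ((2:ℕ) : ZMod (8*n)) = ((8*n - 2 : ℕ) : ZMod (8*n)) := by
    rcases h2S with h | h | h | h | h | h
    · exact Or.inl h
    · exact Or.inr h
    · exact absurd h (elim_odd _ (by omega))
    · exact absurd h (elim_odd _ (by omega))
    · exact absurd h (elim_odd _ (by omega))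
    · exact absurd h (elim_odd _ (by omega))
  rcases haS with h | h | h | h | h | h
  · exact absurd h (elim_even _ (by omega))
  · exact absurd h (elim_even _ (by omega))
  all_goals {
    rcases step n (by omega) u _ _ h h2 with hd | hd <;>
      rcases int_helper _ _ (by push_cast; omega) hd (by push_cast; omega) (by push_cast; omega)
        with h' | h' | h' | h' <;>
      omega
  }
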